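/- The Cayley cubic p(x, y, z) = 1 + 2xyz − x² − y² − z² ∈ ℝ[x, y, z] is a real-zero polynomial with respect to e = (0, 0, 0), the point a = (1, 0, 0) lies on the boundary of the rigidly convex set S_e(p) and is a smooth point of p, yet p is not strictly quasi-concave at a. -/

import Mathlib

open MvPolynomial

/-- The univariate polynomial `t ↦ h(a + t·v)` obtained by restricting a multivariate
polynomial `h` to the line through `a` with direction `v`. -/
noncomputable def linePoly {n : ℕ} (h : MvPolynomial (Fin n) ℝ) (a v : Fin n → ℝ) :
    Polynomial ℝ :=
  MvPolynomial.aeval (fun i => Polynomial.C (a i) + Polynomial.C (v i) * Polynomial.X) h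

/-- A real univariate polynomial has only real roots. -/
def RealRooted (q : Polynomial ℝ) : Prop :=
  ∀ z : ℂ, Polynomial.aeval z q = 0 → z.im = 0

/-- A real univariate polynomial has only non-negative real roots. -/
def NonnegRealRooted (q : Polynomial ℝ) : Prop :=
  ∀ z : ℂ, Polynomial.aeval z q = 0 → z.im = 0 ∧ 0 ≤ z.re

/-- `h` is hyperbolic in direction `e`: `h(e) ≠ 0` and for all `a` the univariate
polynomial `t ↦ h(a - t·e)` has only real roots. -/
def IsHyperbolic {n : ℕ} (h : MvPolynomial (Fin n) ℝ) (e : Fin n → ℝ) : Prop :=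
  MvPolynomial.eval e h ≠ 0 ∧ ∀ a : Fin n → ℝ, RealRooted (linePoly h a (-e))

/-- The hyperbolicity cone `Λ_e(h)`. -/
def hypCone {n : ℕ} (h : MvPolynomial (Fin n) ℝ) (e : Fin n → ℝ) : Set (Fin n → ℝ) :=
  {a | NonnegRealRooted (linePoly h a (-e))}

/-- multiplicity (order of vanishing) of `h` at `a`: the smallest `m` such that the
degree-`m` homogeneous component of `h(x + a)` is non-zero. -/
noncomputable def multAt {n : ℕ} (h : MvPolynomial (Fin n) ℝ) (a : Fin n → ℝ) : ℕ :=
  sInf {m | MvPolynomial.homogeneousComponent m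
    (MvPolynomial.aeval (fun i => MvPolynomial.X i + MvPolynomial.C (a i)) h) ≠ 0}

/-- `p` is a real-zero polynomial with respect to `e`. -/
def IsRealZero {n : ℕ} (p : MvPolynomial (Fin n) ℝ) (e : Fin n → ℝ) : Prop :=
  MvPolynomial.eval e p ≠ 0 ∧ ∀ v : Fin n → ℝ, RealRooted (linePoly p e v)

/-- The rigidly convex set `S_e(p)` of a real-zero polynomial. -/
def rigidSet {n : ℕ} (p : MvPolynomial (Fin n) ℝ) (e : Fin n → ℝ) : Set (Fin n → ℝ) :=
  {a | ∀ t : ℝ, 0 ≤ t → t < 1 → ¬ (linePoly p e (a - e)).IsRoot t}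

/-- A polynomial is strictly quasi-concave at `a` if its Hessian at `a` is negative
definite on the orthogonal complement of its gradient at `a`. -/
def StrictQuasiConcaveAt {n : ℕ} (g : MvPolynomial (Fin n) ℝ) (a : Fin n → ℝ) : Prop :=
  ∀ v : Fin n → ℝ, v ≠ 0 →
    (∑ i, v i * MvPolynomial.eval a (MvPolynomial.pderiv i g)) = 0 →
    (∑ i, ∑ j, v i * v j *
      MvPolynomial.eval a (MvPolynomial.pderiv i (MvPolynomial.pderiv j g))) < 0

/-- A spectrahedral shadow (cone version): a linear image of
`{a : a₁M₁ + ⋯ + aₘMₘ ⪰ 0}` for real symmetric matrices `Mᵢ`. -/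
def IsSpectrahedralShadowCone {n : ℕ} (S : Set (Fin n → ℝ)) : Prop :=
  ∃ (m d : ℕ) (M : Fin m → Matrix (Fin d) (Fin d) ℝ)
    (L : (Fin m → ℝ) →ₗ[ℝ] (Fin n → ℝ)),
      (∀ i, (M i).IsSymm) ∧ S = L '' {a | (∑ i, a i • M i).PosSemidef}

/-- A spectrahedral shadow: a linear image of
`{b : M₀ + b₁M₁ + ⋯ + bₘMₘ ⪰ 0}` for real symmetric matrices `Mᵢ`. -/
def IsSpectrahedralShadow {n : ℕ} (S : Set (Fin n → ℝ)) : Prop :=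
  ∃ (m d : ℕ) (M₀ : Matrix (Fin d) (Fin d) ℝ) (M : Fin m → Matrix (Fin d) (Fin d) ℝ)
    (L : (Fin m → ℝ) →ₗ[ℝ] (Fin n → ℝ)),
      M₀.IsSymm ∧ (∀ i, (M i).IsSymm) ∧
      S = L '' {b | (M₀ + ∑ i, b i • M i).PosSemidef}

/-- A convex set is pointed if it contains no affine line. -/
def PointedSet {n : ℕ} (S : Set (Fin n → ℝ)) : Prop :=
  ¬ ∃ (a v : Fin n → ℝ), v ≠ 0 ∧ ∀ t : ℝ, a + t • v ∈ S

/-- Directional derivative `∂_e h = Σᵢ eᵢ ∂h/∂xᵢ`. -/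
noncomputable def dirDeriv {n : ℕ} (e : Fin n → ℝ) (h : MvPolynomial (Fin n) ℝ) :
    MvPolynomial (Fin n) ℝ :=
  ∑ i, e i • MvPolynomial.pderiv i h

/-- The Cayley cubic `p(x,y,z) = 1 + 2xyz − x² − y² − z²`. -/
noncomputable def cayleyCubic : MvPolynomial (Fin 3) ℝ :=
  1 + MvPolynomial.C 2 * (MvPolynomial.X 0 * MvPolynomial.X 1 * MvPolynomial.X 2)
    - MvPolynomial.X 0 ^ 2 - MvPolynomial.X 1 ^ 2 - MvPolynomial.X 2 ^ 2


lemma amgm3 (a b c : ℝ) : 27*(2*a*b*c)^2 ≤ 4*(a^2+b^2+c^2)^3 := by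
  nlinarith [sq_nonneg (a^2-b^2), sq_nonneg (b^2-c^2), sq_nonneg (a^2-c^2),
    sq_nonneg a, sq_nonneg b, sq_nonneg c, sq_nonneg (a*b), sq_nonneg (b*c), sq_nonneg (a*c),
    mul_nonneg (mul_nonneg (sq_nonneg a) (sq_nonneg b)) (sq_nonneg c),
    sq_nonneg (a*b-b*c), sq_nonneg (a*b-a*c), sq_nonneg (b*c-a*c)]

lemma realRooted_aux (α s x y : ℝ) (hs : 27*α^2 ≤ 4*s^3) (hs0 : 0 ≤ s)
    (hre : 1 + α*(x^3 - 3*x*y^2) - s*(x^2 - y^2) = 0)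
    (him : α*(3*x^2*y - y^3) - 2*s*x*y = 0) : y = 0 := by
  by_contra hy
  have hy2 : 0 < y^2 := by positivity
  have E2 : α*(3*x^2-y^2) = 2*s*x := by
    have h : y * (α*(3*x^2-y^2) - 2*s*x) = 0 := by linear_combination him
    rcases mul_eq_zero.1 h with h | h
    · exact absurd h hy
    · linarith
  by_cases hα : α = 0
  · subst hα
    simp only [zero_mul] at E2
    by_cases hs' : s = 0
    · subst hs'; simp at hre
    · have hx : x = 0 := by
        rcases mul_eq_zero.1 (by linarith : s * x = 0) with h | h
        · exact absurd h hs'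
        · exact h
      subst hx
      have : 0 < s := lt_of_le_of_ne hs0 (Ne.symm hs')
      nlinarith [hre]
  · have hx : x ≠ 0 := by
      intro hx0; subst hx0
      have : α * y^2 = 0 := by linarith [E2]
      rcases mul_eq_zero.1 this with h | h
      · exact hα h
      · linarith
    have E1 : α*(x^2+y^2)^2 = 2*x := by linear_combination (-2*x)*hre + (x^2-y^2)*E2
    have E3 : s*(x^2+y^2)^2 = 3*x^2-y^2 := by
      have h2x : (2*x) ≠ 0 := by simpa using hx
      apply mul_left_cancel₀ h2x
      linear_combination (3*x^2-y^2)*E1 - (x^2+y^2)^2*E2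
    have hA2 : α^2*((x^2+y^2)^2)^2 = 4*x^2 := by linear_combination (α*(x^2+y^2)^2 + 2*x)*E1
    have hB3 : s^3*((x^2+y^2)^2)^3 = (3*x^2-y^2)^3 := by
      linear_combination (s^2*(x^2+y^2)^4 + s*(x^2+y^2)^2*(3*x^2-y^2) + (3*x^2-y^2)^2) * E3
    have h6 : (0:ℝ) ≤ ((x^2+y^2)^2)^3 := by positivity
    have hineq : 27*α^2*((x^2+y^2)^2)^3 ≤ 4*(s^3*((x^2+y^2)^2)^3) := by
      nlinarith [mul_le_mul_of_nonneg_right hs h6]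
    rw [hB3] at hineq
    nlinarith [hA2, hineq, sq_nonneg x, hy2, mul_pos hy2 hy2, sq_nonneg (x*y), sq_nonneg (x^2*y)]

theorem lpEq (v : Fin 3 → ℝ) : linePoly cayleyCubic 0 v =
    Polynomial.C 1 + Polynomial.C (2 * v 0 * v 1 * v 2) * Polynomial.X ^ 3
      - Polynomial.C (v 0 ^ 2 + v 1 ^ 2 + v 2 ^ 2) * Polynomial.X ^ 2 := by
  simp only [linePoly, cayleyCubic, map_add, map_sub, map_mul, map_one, map_pow,
    MvPolynomial.aeval_X, MvPolynomial.aeval_C, Pi.zero_apply, Polynomial.C_0,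
    Polynomial.algebraMap_eq, Polynomial.C_mul, Polynomial.C_add, Polynomial.C_pow]
  ring

theorem lpEval (v : Fin 3 → ℝ) (t : ℝ) : Polynomial.eval t (linePoly cayleyCubic 0 v) =
    1 + (2 * v 0 * v 1 * v 2) * t^3 - (v 0 ^ 2 + v 1 ^ 2 + v 2 ^ 2) * t^2 := by
  rw [lpEq]; simp

/-- **the Samosa.** The Cayley cubic is real-zero with respect to
`e = (0,0,0)`, the point `a = (1,0,0)` is a boundary point of its rigidly convex set and a
smooth point of `p` (`p(a) = 0`, `∇p(a) ≠ 0`), yet `p` is not strictly quasi-concave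
at `a`. -/
theorem cayleyCubic_smooth_boundary_point_not_strictQuasiConcave :
    IsRealZero cayleyCubic 0 ∧
    ![1, 0, 0] ∈ frontier (rigidSet cayleyCubic 0) ∧
    MvPolynomial.eval ![1, 0, 0] cayleyCubic = 0 ∧
    (fun i => MvPolynomial.eval ![1, 0, 0] (MvPolynomial.pderiv i cayleyCubic)) ≠ 0 ∧
    ¬ StrictQuasiConcaveAt cayleyCubic ![1, 0, 0] := by
  refine ⟨?_, ?_, ?_, ?_, ?_⟩
  · -- IsRealZero
    constructor
    · simp [cayleyCubic]
    · intro v z hz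
      rw [lpEq] at hz
      simp only [map_add, map_sub, map_mul, map_pow, map_one, Polynomial.aeval_C,
        Polynomial.aeval_X, Complex.coe_algebraMap] at hz
      set α := 2 * v 0 * v 1 * v 2 with hαdef
      set s := v 0 ^ 2 + v 1 ^ 2 + v 2 ^ 2 with hsdef
      have hz' : 1 + (α:ℂ) * z^3 - (s:ℂ) * z^2 = 0 := by
        push_cast [hαdef, hsdef]
        push_cast at hz
        linear_combination hz
      rw [Complex.ext_iff] at hz'
      simp only [Complex.add_re, Complex.add_im, Complex.sub_re, Complex.sub_im,
        Complex.mul_re, Complex.mul_im, Complex.one_re, Complex.one_im,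
        Complex.ofReal_re, Complex.ofReal_im, Complex.zero_re, Complex.zero_im,
        pow_succ, pow_zero, one_mul] at hz'
      obtain ⟨h1, h2⟩ := hz'
      have hs : 27*α^2 ≤ 4*s^3 := by rw [hαdef, hsdef]; exact amgm3 (v 0) (v 1) (v 2)
      have hs0 : 0 ≤ s := by rw [hsdef]; positivity
      exact realRooted_aux α s z.re z.im hs hs0 (by linear_combination h1)
        (by linear_combination h2)
  · -- frontier
    rw [frontier_eq_closure_inter_closure]
    constructor
    · apply subset_closure
      intro t ht0 ht1 hroot
      rw [Polynomial.IsRoot, show (![1,0,0] : Fin 3 → ℝ) - 0 = ![1,0,0] by simp, lpEval] at hroot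
      norm_num [Matrix.cons_val_two, Matrix.tail_cons, Matrix.head_cons] at hroot
      nlinarith [hroot]
    · have hf : Filter.Tendsto (fun δ : ℝ => (![1+δ,0,0] : Fin 3 → ℝ))
          (nhdsWithin 0 (Set.Ioi 0)) (nhds ![1,0,0]) := by
        apply Filter.Tendsto.mono_left _ nhdsWithin_le_nhds
        have hcont : Continuous (fun δ : ℝ => (![1+δ,0,0] : Fin 3 → ℝ)) := by
          apply continuous_pi
          intro i
          fin_cases i <;> simp <;> continuity
        have h0 : (![1+(0:ℝ),0,0] : Fin 3 → ℝ) = ![1,0,0] := by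
          funext i; fin_cases i <;> norm_num
        simpa [h0] using hcont.tendsto 0
      apply mem_closure_of_tendsto hf
      filter_upwards [self_mem_nhdsWithin] with δ (hδ : δ ∈ Set.Ioi 0)
      simp only [Set.mem_Ioi] at hδ
      intro hmem
      have h1δ : (0:ℝ) < 1 + δ := by linarith
      apply hmem (1/(1+δ)) (by positivity) (by rw [div_lt_one h1δ]; linarith)
      rw [Polynomial.IsRoot, show (![1+δ,0,0] : Fin 3 → ℝ) - 0 = ![1+δ,0,0] by simp, lpEval]
      norm_num [Matrix.cons_val_two, Matrix.tail_cons, Matrix.head_cons]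
      field_simp
      ring
  · -- p(a) = 0
    simp [cayleyCubic]
  · -- gradient nonzero
    intro h
    have := congrFun h 0
    simp [cayleyCubic, pderiv_X, Pi.single_apply, pow_two] at this
  · -- not strictly quasi-concave
    intro h
    have hv : (![0,1,1] : Fin 3 → ℝ) ≠ 0 := by
      intro hv0
      have := congrFun hv0 1
      norm_num at this
    have hg : (∑ i, (![0,1,1] : Fin 3 → ℝ) i *
        MvPolynomial.eval ![1,0,0] (MvPolynomial.pderiv i cayleyCubic)) = 0 := by
      simp [Fin.sum_univ_three, cayleyCubic, pderiv_X, Pi.single_apply, pow_two]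
    have hh := h ![0,1,1] hv hg
    simp [Fin.sum_univ_three, cayleyCubic, pderiv_X, Pi.single_apply, pow_two] at hh
    linarith
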